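/- Let G be a graph on [n] and let i_0 < i_1 < ⋯ < i_l be an induced path in G (l ≥ 1). Then the l edges {x_{i_0}, y_{i_1}}, {x_{i_1}, y_{i_2}}, …, {x_{i_{l-1}}, y_{i_l}} form an induced matching of the bipartite graph H = in_lex(G). -/

import Mathlib

open SimpleGraph

/-- `G` has the interval property with respect to its labeling: for every edge `{i,j}`
with `i < j`, every pair `{k,l}` with `i ≤ k < l ≤ j` is an edge of `G`. -/
def HasIntervalProperty {n : ℕ} (G : SimpleGraph (Fin n)) : Prop :=
  ∀ i j k l : Fin n, G.Adj i j → i < j → i ≤ k → k < l → l ≤ j → G.Adj k l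

/-- The bipartite graph `in_lex(G)` on `{x_1,…,x_n} ∪ {y_1,…,y_n}` (here `Sum.inl i = x_i`,
`Sum.inr j = y_j`) whose edges are the pairs `{x_i, y_j}` with `i < j` and `{i,j} ∈ E(G)`. -/
def inLex {n : ℕ} (G : SimpleGraph (Fin n)) : SimpleGraph (Fin n ⊕ Fin n) :=
  SimpleGraph.fromRel (fun u v =>
    ∃ i j : Fin n, i < j ∧ G.Adj i j ∧ u = Sum.inl i ∧ v = Sum.inr j)

/-- `M` is an induced matching of `H`: a set of edges of `H`, pairwise vertex-disjoint,
such that no edge of `H` joins two vertices lying in distinct edges of `M`. -/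
def IsInducedMatching {V : Type*} (H : SimpleGraph V) (M : Set (Sym2 V)) : Prop :=
  M ⊆ H.edgeSet ∧
  (∀ e ∈ M, ∀ f ∈ M, e ≠ f → ∀ v, v ∈ e → v ∉ f) ∧
  (∀ e ∈ M, ∀ f ∈ M, e ≠ f → ∀ u ∈ e, ∀ v ∈ f, ¬ H.Adj u v)

/-- An indexed family of `m` pairwise distinct edges forming an induced matching of `H`. -/
def IsInducedMatchingFamily {V : Type*} (H : SimpleGraph V) {m : ℕ} (f : Fin m → Sym2 V) : Prop :=
  Function.Injective f ∧ IsInducedMatching H (Set.range f)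

/-- `p` is an induced path of length `l` in `G`: `l+1` distinct vertices such that the edges
of `G` among them are exactly the consecutive pairs. -/
def IsInducedPath {V : Type*} (G : SimpleGraph V) (l : ℕ) (p : Fin (l + 1) → V) : Prop :=
  Function.Injective p ∧
  ∀ a b : Fin (l + 1), G.Adj (p a) (p b) ↔ ((a : ℕ) + 1 = b ∨ (b : ℕ) + 1 = a)

/-- `c` is an induced cycle of length `k` in `H`: `k` distinct vertices such that the edges
of `H` among them are exactly the consecutive pairs (cyclically). -/
def IsInducedCycle {V : Type*} (H : SimpleGraph V) (k : ℕ) (c : Fin k → V) : Prop :=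
  3 ≤ k ∧ Function.Injective c ∧
  ∀ a b : Fin k, H.Adj (c a) (c b) ↔ (((a : ℕ) + 1) % k = b ∨ ((b : ℕ) + 1) % k = a)

/-- Condition (∗) for an induced matching `{x_{i t}, y_{j t}}` of `in_lex(G)`: for every
index `a` and vertex `t < i a` with `{t, j a} ∈ E(G)`, replacing `x_{i a}` by `x_t`
does not yield an induced matching of `in_lex(G)`. -/
def CondStar {n m : ℕ} (G : SimpleGraph (Fin n)) (i j : Fin m → Fin n) : Prop :=
  ∀ a : Fin m, ∀ t : Fin n, t < i a → G.Adj t (j a) →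
    ¬ IsInducedMatchingFamily (inLex G)
        (fun u => if u = a then s(Sum.inl t, Sum.inr (j u))
                  else s(Sum.inl (i u), Sum.inr (j u)))

/-- If `i_0 < i_1 < ⋯ < i_l` is an induced path in `G` (`l ≥ 1`), then the `l` edges
`{x_{i_0}, y_{i_1}}, …, {x_{i_{l-1}}, y_{i_l}}` form an induced matching of `in_lex(G)`. -/
theorem stmt_5 {n : ℕ} (G : SimpleGraph (Fin n)) (l : ℕ) (hl : 1 ≤ l)
    (p : Fin (l + 1) → Fin n) (hp : IsInducedPath G l p) (hmono : StrictMono p) :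
    IsInducedMatchingFamily (inLex G)
      (fun t : Fin l => s(Sum.inl (p t.castSucc), Sum.inr (p t.succ))) := by
  obtain ⟨hpinj, hpadj⟩ := hp
  have hadj : ∀ u v, (inLex G).Adj u v ↔
      ∃ i j : Fin n, i < j ∧ G.Adj i j ∧
        ((u = Sum.inl i ∧ v = Sum.inr j) ∨ (v = Sum.inl i ∧ u = Sum.inr j)) := by
    intro u v
    constructor
    · rintro ⟨hne, h | h⟩
      · obtain ⟨i, j, h1, h2, h3, h4⟩ := h
        exact ⟨i, j, h1, h2, Or.inl ⟨h3, h4⟩⟩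
      · obtain ⟨i, j, h1, h2, h3, h4⟩ := h
        exact ⟨i, j, h1, h2, Or.inr ⟨h3, h4⟩⟩
    · rintro ⟨i, j, h1, h2, h | h⟩
      · exact ⟨by simp [h.1, h.2], Or.inl ⟨i, j, h1, h2, h.1, h.2⟩⟩
      · exact ⟨by simp [h.1, h.2], Or.inr ⟨i, j, h1, h2, h.1, h.2⟩⟩
  -- the key non-adjacency fact between vertices of distinct edges
  have key : ∀ a b : Fin l, a ≠ b →
      ¬ (inLex G).Adj (Sum.inl (p a.castSucc)) (Sum.inr (p b.succ)) := by
    intro a b hab h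
    rw [hadj] at h
    obtain ⟨i, j, hij, hGij, hc⟩ := h
    rcases hc with ⟨h1, h2⟩ | ⟨h1, h2⟩
    · -- p a.castSucc = i, p b.succ = j
      rw [Sum.inl.injEq] at h1; rw [Sum.inr.injEq] at h2
      subst h1; subst h2
      rw [hpadj] at hGij
      rcases hGij with h | h
      · simp only [Fin.coe_castSucc, Fin.val_succ] at h
        exact hab (Fin.ext (Nat.succ_injective h))
      · -- (b+1)+1 = a, so a > b+1, contradicting p a.castSucc < p b.succ
        have : (b.succ : Fin (l+1)) < a.castSucc := by
          simp only [Fin.lt_def, Fin.coe_castSucc, Fin.val_succ] at h ⊢; omega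
        exact absurd hij (not_lt.mpr (le_of_lt (hmono this)))
    · exact (Sum.inl_ne_inr h2).elim
  constructor
  · -- injectivity
    intro a b hab
    simp only [Sym2.eq, Sym2.rel_iff', Prod.mk.injEq, Prod.swap_prod_mk] at hab
    rcases hab with ⟨h1, _⟩ | ⟨h1, _⟩
    · rw [Sum.inl.injEq] at h1
      exact Fin.castSucc_injective _ (hpinj h1)
    · exact (Sum.inl_ne_inr h1).elim
  refine ⟨?_, ?_, ?_⟩
  · -- edges
    rintro e ⟨t, rfl⟩
    rw [SimpleGraph.mem_edgeSet, hadj]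
    refine ⟨p t.castSucc, p t.succ, hmono (Fin.castSucc_lt_succ (i := t)), ?_, Or.inl ⟨rfl, rfl⟩⟩
    rw [hpadj]
    left; simp
  · -- pairwise disjoint
    rintro e ⟨a, rfl⟩ f ⟨b, rfl⟩ hef v hv hv'
    have hab : a ≠ b := fun h => hef (by rw [h])
    simp only [Sym2.mem_iff] at hv hv'
    rcases hv with rfl | rfl <;> rcases hv' with h | h
    · rw [Sum.inl.injEq] at h
      exact hab (Fin.castSucc_injective _ (hpinj h))
    · exact Sum.inl_ne_inr h
    · exact Sum.inl_ne_inr h.symm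
    · rw [Sum.inr.injEq] at h
      exact hab (Fin.succ_injective _ (hpinj h))
  · -- induced
    rintro e ⟨a, rfl⟩ f ⟨b, rfl⟩ hef u hu v hv hadjuv
    have hab : a ≠ b := fun h => hef (by rw [h])
    simp only [Sym2.mem_iff] at hu hv
    rcases hu with rfl | rfl <;> rcases hv with rfl | rfl
    · -- inl, inl : impossible
      rw [hadj] at hadjuv
      obtain ⟨i, j, _, _, hc⟩ := hadjuv
      rcases hc with ⟨_, h2⟩ | ⟨_, h2⟩ <;> exact Sum.inl_ne_inr h2
    · exact key a b hab hadjuv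
    · exact key b a hab.symm ((inLex G).adj_symm hadjuv)
    · rw [hadj] at hadjuv
      obtain ⟨i, j, _, _, hc⟩ := hadjuv
      rcases hc with ⟨h1, _⟩ | ⟨h1, _⟩ <;> exact Sum.inl_ne_inr h1.symm
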